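/- For any convex multiplicative system of means M, there exists α ∈ [0,1] such that M((s, 1−s), (1, 0)) = s^α for all s ∈ (0,1). -/

import Mathlib

open scoped NNReal ENNReal BigOperators

/-- The power mean `M_p` of order `p ∈ [0,∞]` with weights `w` and arguments `x`. -/
noncomputable def powerMean (p : ℝ≥0∞) {n : ℕ} (w x : Fin n → ℝ≥0) : ℝ≥0 :=
  if p = ∞ then (Finset.univ.filter (fun i => 0 < w i)).sup x
  else if p = 0 then ∏ i, x i ^ ((w i : ℝ))
  else (∑ i, w i * x i ^ p.toReal) ^ (1 / p.toReal)

/-- A system of means: for each `n`, a function `M n : Δ_n × ℝ≥0ⁿ → ℝ≥0`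
(defined on all of `ℝ≥0ⁿ × ℝ≥0ⁿ`, with the axioms demanded only when `∑ w = 1`),
satisfying functoriality, consistency and monotonicity. -/
structure MeanSystem where
  M : ∀ n : ℕ, (Fin n → ℝ≥0) → (Fin n → ℝ≥0) → ℝ≥0
  functorial : ∀ {m n : ℕ} (f : Fin m → Fin n) (w : Fin m → ℝ≥0),
    (∑ i, w i) = 1 → ∀ x : Fin n → ℝ≥0,
      M n (fun j => ∑ i ∈ Finset.univ.filter (fun i => f i = j), w i) x = M m w (x ∘ f)
  consistent : ∀ c : ℝ≥0, M 1 (fun _ => 1) (fun _ => c) = c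
  mono : ∀ {n : ℕ} (w x y : Fin n → ℝ≥0), (∑ i, w i) = 1 →
    (∀ i, x i ≤ y i) → M n w x ≤ M n w y

/-- Multiplicativity of a system of means, with respect to the fixed bijection
`finProdFinEquiv : Fin m × Fin n ≃ Fin (m * n)`. -/
def MeanSystem.IsMultiplicative (S : MeanSystem) : Prop :=
  ∀ {m n : ℕ} (w x : Fin m → ℝ≥0) (v y : Fin n → ℝ≥0),
    (∑ i, w i) = 1 → (∑ j, v j) = 1 →
    S.M (m * n) (fun k => w (finProdFinEquiv.symm k).1 * v (finProdFinEquiv.symm k).2)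
        (fun k => x (finProdFinEquiv.symm k).1 * y (finProdFinEquiv.symm k).2)
      = S.M m w x * S.M n v y

/-- Convexity of a system of means. -/
def MeanSystem.IsConvex (S : MeanSystem) : Prop :=
  ∀ {n : ℕ} (w x y : Fin n → ℝ≥0), (∑ i, w i) = 1 →
    S.M n w (fun i => (x i + y i) / 2) ≤ max (S.M n w x) (S.M n w y)

/- ### Auxiliary lemmas -/

/-- A mean of a constant vector is that constant. -/
lemma mean_const (S : MeanSystem) {n : ℕ} (w : Fin n → ℝ≥0) (hw : (∑ i, w i) = 1) (c : ℝ≥0) :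
    S.M n w (fun _ => c) = c := by
  have h := S.functorial (fun _ => (0 : Fin 1)) w hw (fun _ => c)
  have h2 : (fun j : Fin 1 => ∑ i ∈ Finset.univ.filter (fun i => (0:Fin 1) = j), w i)
      = (fun _ : Fin 1 => (1:ℝ≥0)) := by
    funext j
    rw [Subsingleton.elim j 0]
    simpa using hw
  rw [h2] at h
  exact h.symm.trans (S.consistent c)

/-- Swap symmetry. -/
lemma mean_swap (S : MeanSystem) (s : ℝ≥0) (hs : s ≤ 1) :
    S.M 2 ![s, 1-s] ![0,1] = S.M 2 ![1-s, s] ![1,0] := by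
  have hsum : (∑ i, (![1-s, s] : Fin 2 → ℝ≥0) i) = 1 := by
    simp [Fin.sum_univ_two, tsub_add_cancel_of_le hs]
  have h := S.functorial (![1,0] : Fin 2 → Fin 2) ![1-s, s] hsum ![0,1]
  have h2 : (fun j : Fin 2 => ∑ i ∈ Finset.univ.filter (fun i => (![1,0] : Fin 2 → Fin 2) i = j),
      (![1-s, s] : Fin 2 → ℝ≥0) i) = ![s, 1-s] := by
    funext j
    fin_cases j <;> simp [Finset.sum_filter, Fin.sum_univ_two]
  have h3 : ((![0,1] : Fin 2 → ℝ≥0) ∘ (![1,0] : Fin 2 → Fin 2)) = ![1,0] := by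
    funext k; fin_cases k <;> simp
  rw [h2, h3] at h
  exact h

lemma nnreal_combine (s t : ℝ≥0) (hs : s ≤ 1) (ht : t ≤ 1) :
    s*(1-t) + ((1-s)*t + (1-s)*(1-t)) = 1 - s*t := by
  have hst : s * t ≤ 1 := mul_le_one' hs ht
  apply NNReal.coe_injective
  push_cast [NNReal.coe_sub hs, NNReal.coe_sub ht, NNReal.coe_sub hst]
  ring

/-- Multiplicativity of `θ`. -/
lemma theta_mul (S : MeanSystem) (hmul : S.IsMultiplicative) (s t : ℝ≥0)
    (hs1 : s ≤ 1) (ht1 : t ≤ 1) :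
    S.M 2 ![s*t, 1 - s*t] ![1,0] = S.M 2 ![s,1-s] ![1,0] * S.M 2 ![t,1-t] ![1,0] := by
  have hsum_s : (∑ i, (![s, 1-s] : Fin 2 → ℝ≥0) i) = 1 := by
    simp [Fin.sum_univ_two, add_tsub_cancel_of_le hs1]
  have hsum_t : (∑ i, (![t, 1-t] : Fin 2 → ℝ≥0) i) = 1 := by
    simp [Fin.sum_univ_two, add_tsub_cancel_of_le ht1]
  have key := hmul ![s,1-s] ![1,0] ![t,1-t] ![1,0] hsum_s hsum_t
  set W : Fin (2*2) → ℝ≥0 :=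
    fun k => ![s,1-s] (finProdFinEquiv.symm k).1 * ![t,1-t] (finProdFinEquiv.symm k).2 with hW
  set f : Fin (2*2) → Fin 2 := fun k =>
    if (finProdFinEquiv.symm k).1 = 0 ∧ (finProdFinEquiv.symm k).2 = 0 then 0 else 1 with hf
  have hsumW : (∑ k, W k) = 1 := by
    rw [hW]
    rw [Equiv.sum_comp (finProdFinEquiv.symm)
      (fun p : Fin 2 × Fin 2 => (![s,1-s] : Fin 2 → ℝ≥0) p.1 * (![t,1-t] : Fin 2 → ℝ≥0) p.2)]
    rw [Fintype.sum_prod_type]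
    rw [← Finset.sum_mul_sum]
    rw [hsum_s, hsum_t, one_mul]
  have hfun := S.functorial f W hsumW ![1,0]
  have hone : ∀ i : Fin 2, i ≠ 0 → i = 1 := by decide
  have hpush : (fun j : Fin 2 => ∑ i ∈ Finset.univ.filter (fun i => f i = j), W i)
      = ![s*t, 1 - s*t] := by
    funext j
    rw [Finset.sum_filter, hW, hf]
    rw [Equiv.sum_comp (finProdFinEquiv.symm)
      (fun p : Fin 2 × Fin 2 => if (if p.1 = 0 ∧ p.2 = 0 then (0:Fin 2) else 1) = j
        then (![s,1-s] : Fin 2 → ℝ≥0) p.1 * (![t,1-t] : Fin 2 → ℝ≥0) p.2 else 0)]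
    rw [Fintype.sum_prod_type]
    fin_cases j
    · simp [Fin.sum_univ_two]
    · simp [Fin.sum_univ_two]
      exact nnreal_combine s t hs1 ht1
  have hcomp : ((![1,0] : Fin 2 → ℝ≥0) ∘ f)
      = (fun k => (![1,0] : Fin 2 → ℝ≥0) (finProdFinEquiv.symm k).1
          * (![1,0] : Fin 2 → ℝ≥0) (finProdFinEquiv.symm k).2) := by
    funext k
    simp only [Function.comp, hf]
    by_cases h : (finProdFinEquiv.symm k).1 = 0 ∧ (finProdFinEquiv.symm k).2 = 0
    · rw [if_pos h, h.1, h.2]; simp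
    · rw [if_neg h]
      rcases not_and_or.mp h with h1 | h2
      · rw [hone _ h1]; simp
      · rw [hone _ h2]; simp
  rw [hpush, hcomp] at hfun
  exact hfun.trans key

/-- The convexity bound at `1/2`. -/
lemma theta_half (S : MeanSystem) (hconv : S.IsConvex) :
    (1/2 : ℝ≥0) ≤ S.M 2 ![1/2, 1 - 1/2] ![1,0] := by
  have hsum : (∑ i, (![1/2, 1 - 1/2] : Fin 2 → ℝ≥0) i) = 1 := by
    simp [Fin.sum_univ_two, add_tsub_cancel_of_le (by norm_num : (1/2:ℝ≥0) ≤ 1)]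
  have h := hconv ![1/2, 1-1/2] ![1,0] ![0,1] hsum
  have h1 : (fun i => ((![1,0] : Fin 2 → ℝ≥0) i + (![0,1] : Fin 2 → ℝ≥0) i) / 2)
      = (fun _ : Fin 2 => (1/2 : ℝ≥0)) := by
    funext i; fin_cases i <;> simp
  rw [h1, mean_const S _ hsum (1/2)] at h
  have h2 : S.M 2 ![1/2, 1-1/2] ![0,1] = S.M 2 ![1/2, 1-1/2] ![1,0] := by
    have hh : (1 - 1/2 : ℝ≥0) = 1/2 := by
      apply NNReal.coe_injective
      rw [NNReal.coe_sub (by norm_num)]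
      norm_num
    rw [mean_swap S (1/2) (by norm_num), hh]
  rw [h2, max_self] at h
  exact h

/-- Classification of monotone multiplicative functions on `(0,1)` bounded as needed. -/
lemma power_classify (θ : ℝ≥0 → ℝ≥0)
    (hmul : ∀ s t : ℝ≥0, 0 < s → s < 1 → 0 < t → t < 1 → θ (s*t) = θ s * θ t)
    (hmono : ∀ s t : ℝ≥0, 0 < s → s ≤ t → t < 1 → θ s ≤ θ t)
    (hle1 : ∀ s : ℝ≥0, s < 1 → θ s ≤ 1)
    (hhalf : (1/2 : ℝ≥0) ≤ θ (1/2)) :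
    ∃ α : ℝ, 0 ≤ α ∧ α ≤ 1 ∧ ∀ s : ℝ≥0, 0 < s → s < 1 → θ s = s ^ α := by
  have hhp0 : (0:ℝ≥0) < 1/2 := by norm_num
  have hhp1 : (1/2:ℝ≥0) < 1 := by
    have : ((1/2:ℝ≥0):ℝ) < ((1:ℝ≥0):ℝ) := by norm_num
    exact_mod_cast this
  have hpow : ∀ s : ℝ≥0, 0 < s → s < 1 → ∀ n : ℕ, 1 ≤ n → θ (s^n) = θ s ^ n := by
    intro s hs0 hs1 n hn
    induction n, hn using Nat.le_induction with
    | base => simp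
    | succ n hn ih =>
      have hsn1 : s^n < 1 := pow_lt_one₀ zero_le hs1 (by omega)
      have hsn0 : 0 < s^n := pow_pos hs0 n
      rw [pow_succ, pow_succ, hmul _ _ hsn0 hsn1 hs0 hs1, ih]
  have hsmall : ∀ s : ℝ≥0, 0 < s → s < 1 → ∃ m : ℕ, 1 ≤ m ∧ (1/2:ℝ≥0)^m ≤ s := by
    intro s hs0 hs1
    obtain ⟨m, hm⟩ := exists_pow_lt_of_lt_one (by exact_mod_cast hs0 : (0:ℝ) < (s:ℝ))
      (by norm_num : (1/2:ℝ) < 1)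
    refine ⟨m, ?_, ?_⟩
    · rcases Nat.eq_zero_or_pos m with h | h
      · exfalso
        rw [h, pow_zero] at hm
        have hs1' : (s:ℝ) < 1 := by exact_mod_cast hs1
        linarith
      · exact h
    · have : ((1/2:ℝ≥0)^m : ℝ) ≤ (s:ℝ) := by push_cast; linarith
      exact_mod_cast this
  have hpos : ∀ s : ℝ≥0, 0 < s → s < 1 → 0 < θ s := by
    intro s hs0 hs1
    obtain ⟨m, hm1, hm2⟩ := hsmall s hs0 hs1
    have h1 : θ ((1/2:ℝ≥0)^m) = θ (1/2) ^ m := hpow _ hhp0 hhp1 m hm1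
    have h2 : θ ((1/2:ℝ≥0)^m) ≤ θ s := hmono _ _ (pow_pos hhp0 m) hm2 hs1
    have h3 : (0:ℝ≥0) < (1/2:ℝ≥0)^m := pow_pos hhp0 m
    calc (0:ℝ≥0) < (1/2:ℝ≥0)^m := h3
    _ ≤ θ (1/2) ^ m := pow_le_pow_left₀ zero_le hhalf m
    _ = θ ((1/2:ℝ≥0)^m) := h1.symm
    _ ≤ θ s := h2
  by_cases hq1 : θ (1/2) = 1
  · refine ⟨0, le_rfl, zero_le_one, fun s hs0 hs1 => ?_⟩
    rw [NNReal.rpow_zero]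
    obtain ⟨m, hm1, hm2⟩ := hsmall s hs0 hs1
    have h1 : θ ((1/2:ℝ≥0)^m) = 1 := by rw [hpow _ hhp0 hhp1 m hm1, hq1, one_pow]
    have h2 : θ ((1/2:ℝ≥0)^m) ≤ θ s := hmono _ _ (pow_pos hhp0 m) hm2 hs1
    exact le_antisymm (hle1 s hs1) (h1 ▸ h2)
  · have hqlt : θ (1/2) < 1 := lt_of_le_of_ne (hle1 _ hhp1) hq1
    have hqpos : (0:ℝ≥0) < θ (1/2) := lt_of_lt_of_le hhp0 hhalf
    set p : ℝ := Real.log (1/2) with hp_def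
    set q : ℝ := Real.log ((θ (1/2) : ℝ)) with hq_def
    have hp : p < 0 := Real.log_neg (by norm_num) (by norm_num)
    have hq : q < 0 := Real.log_neg (by exact_mod_cast hqpos) (by exact_mod_cast hqlt)
    have hpq : p ≤ q := Real.log_le_log (by norm_num) (by exact_mod_cast hhalf)
    set α : ℝ := q / p with hα_def
    have hα0 : 0 < α := div_pos_of_neg_of_neg hq hp
    have hα1 : α ≤ 1 := by rw [hα_def, div_le_iff_of_neg hp]; linarith
    refine ⟨α, hα0.le, hα1, fun s hs0 hs1 => ?_⟩
    have hs0' : (0:ℝ) < (s:ℝ) := by exact_mod_cast hs0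
    have hs1' : (s:ℝ) < 1 := by exact_mod_cast hs1
    have hθpos : (0:ℝ) < (θ s : ℝ) := by exact_mod_cast hpos s hs0 hs1
    have hθle1 : (θ s : ℝ) ≤ 1 := by exact_mod_cast hle1 s hs1
    set u : ℝ := Real.log (s:ℝ) with hu_def
    set v : ℝ := Real.log ((θ s : ℝ)) with hv_def
    have hu : u < 0 := Real.log_neg hs0' hs1'
    have hv : v ≤ 0 := Real.log_nonpos hθpos.le hθle1
    -- key bridge
    have key : ∀ m n : ℕ, 1 ≤ m → 1 ≤ n →
        (((n:ℝ) * u ≤ m * p → (n:ℝ) * v ≤ m * q) ∧ ((m:ℝ) * p ≤ n * u → (m:ℝ) * q ≤ n * v)) := by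
      intro m n hm hn
      have hsn0 : (0:ℝ≥0) < s^n := pow_pos hs0 n
      have hsn1 : s^n < 1 := pow_lt_one₀ zero_le hs1 (by omega)
      have hhm0 : (0:ℝ≥0) < (1/2:ℝ≥0)^m := pow_pos hhp0 m
      have hhm1 : (1/2:ℝ≥0)^m < 1 := pow_lt_one₀ zero_le hhp1 (by omega)
      have hlogs : Real.log ((s:ℝ)^n) = n * u := by rw [Real.log_pow]
      have hlogh : Real.log ((1/2:ℝ)^m) = m * p := by rw [Real.log_pow, hp_def]
      have hsn0' : (0:ℝ) < (s:ℝ)^n := by positivity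
      have hhm0' : (0:ℝ) < (1/2:ℝ)^m := by positivity
      constructor
      · intro h
        have hle : (s:ℝ)^n ≤ (1/2:ℝ)^m := by
          rw [← Real.exp_log hsn0', ← Real.exp_log hhm0']
          exact Real.exp_le_exp.mpr (by rw [hlogs, hlogh]; exact h)
        have hle2 : s^n ≤ (1/2:ℝ≥0)^m := by
          have : ((s^n : ℝ≥0):ℝ) ≤ (((1/2:ℝ≥0)^m : ℝ≥0):ℝ) := by push_cast; exact hle
          exact_mod_cast this
        have := hmono _ _ hsn0 (le_trans hle2 (le_refl _)) hhm1
        rw [hpow s hs0 hs1 n hn, hpow _ hhp0 hhp1 m hm] at this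
        have h' : ((θ s ^ n : ℝ≥0) : ℝ) ≤ ((θ (1/2) ^ m : ℝ≥0) : ℝ) := by exact_mod_cast this
        push_cast at h'
        calc (n:ℝ) * v = Real.log ((θ s : ℝ)^n) := by rw [Real.log_pow]
        _ ≤ Real.log ((θ (1/2) : ℝ)^m) := Real.log_le_log (by positivity) h'
        _ = m * q := by rw [Real.log_pow]
      · intro h
        have hle : (1/2:ℝ)^m ≤ (s:ℝ)^n := by
          rw [← Real.exp_log hsn0', ← Real.exp_log hhm0']
          exact Real.exp_le_exp.mpr (by rw [hlogs, hlogh]; exact h)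
        have hle2 : (1/2:ℝ≥0)^m ≤ s^n := by
          have : (((1/2:ℝ≥0)^m : ℝ≥0):ℝ) ≤ ((s^n : ℝ≥0):ℝ) := by push_cast; exact hle
          exact_mod_cast this
        have := hmono _ _ hhm0 hle2 hsn1
        rw [hpow s hs0 hs1 n hn, hpow _ hhp0 hhp1 m hm] at this
        have h' : ((θ (1/2) ^ m : ℝ≥0) : ℝ) ≤ ((θ s ^ n : ℝ≥0) : ℝ) := by exact_mod_cast this
        push_cast at h'
        calc (m:ℝ) * q = Real.log ((θ (1/2) : ℝ)^m) := by rw [Real.log_pow]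
        _ ≤ Real.log ((θ s : ℝ)^n) := Real.log_le_log (by positivity) h'
        _ = n * v := by rw [Real.log_pow]
    -- set up positive versions
    set U : ℝ := -u with hU_def
    set P : ℝ := -p with hP_def
    set V : ℝ := -v with hV_def
    set Q : ℝ := -q with hQ_def
    have hU : 0 < U := by simp [hU_def]; linarith
    have hP : 0 < P := by simp [hP_def]; linarith
    have hV : 0 ≤ V := by simp [hV_def]; linarith
    have hQ : 0 < Q := by simp [hQ_def]; linarith
    have key1 : ∀ m n : ℕ, 1 ≤ m → 1 ≤ n → (m:ℝ)/n ≤ U/P → (m:ℝ)/n ≤ V/Q := by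
      intro m n hm hn h
      have hn' : (0:ℝ) < n := by exact_mod_cast hn
      have h1 : (m:ℝ) * P ≤ U * n := (div_le_div_iff₀ hn' hP).mp h
      have h2 : (n:ℝ) * u ≤ m * p := by simp only [hU_def, hP_def] at h1; linarith
      have h3 := ((key m n hm hn).1) h2
      rw [div_le_div_iff₀ hn' hQ]
      simp only [hV_def, hQ_def]
      linarith
    have key2 : ∀ m n : ℕ, 1 ≤ m → 1 ≤ n → U/P ≤ (m:ℝ)/n → V/Q ≤ (m:ℝ)/n := by
      intro m n hm hn h
      have hn' : (0:ℝ) < n := by exact_mod_cast hn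
      have h1 : U * n ≤ (m:ℝ) * P := (div_le_div_iff₀ hP hn').mp h
      have h2 : (m:ℝ) * p ≤ n * u := by simp only [hU_def, hP_def] at h1; linarith
      have h3 := ((key m n hm hn).2) h2
      rw [div_le_div_iff₀ hQ hn']
      simp only [hV_def, hQ_def]
      linarith
    have hUP : 0 < U/P := div_pos hU hP
    have hVQ : 0 ≤ V/Q := div_nonneg hV hQ.le
    have rat_arg : ∀ x y : ℝ, 0 ≤ y →
        (∀ m n : ℕ, 1 ≤ m → 1 ≤ n → (m:ℝ)/n ≤ x → (m:ℝ)/n ≤ y) → x ≤ y := by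
      intro x y hy h
      by_contra hlt
      push_neg at hlt
      obtain ⟨r, hr1, hr2⟩ := exists_rat_btwn hlt
      have hr0 : (0:ℝ) < (r:ℝ) := lt_of_le_of_lt hy hr1
      have hr0' : 0 < r := by exact_mod_cast hr0
      have hnum : 0 < r.num := Rat.num_pos.mpr hr0'
      have hmn : ((r.num.toNat : ℝ))/(r.den : ℝ) = (r:ℝ) := by
        rw [Rat.cast_def]
        congr 1
        exact_mod_cast Int.toNat_of_nonneg hnum.le
      have h1 : (1:ℕ) ≤ r.num.toNat := by omega
      have h2 : (1:ℕ) ≤ r.den := r.pos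
      have := h r.num.toNat r.den h1 h2 (by rw [hmn]; exact hr2.le)
      rw [hmn] at this
      linarith
    have hxy : U/P = V/Q := by
      apply le_antisymm
      · exact rat_arg _ _ hVQ key1
      · -- other direction
        by_contra hlt
        push_neg at hlt
        obtain ⟨r, hr1, hr2⟩ := exists_rat_btwn hlt
        have hr0 : (0:ℝ) < (r:ℝ) := lt_of_le_of_lt hUP.le hr1
        have hr0' : 0 < r := by exact_mod_cast hr0
        have hnum : 0 < r.num := Rat.num_pos.mpr hr0'
        have hmn : ((r.num.toNat : ℝ))/(r.den : ℝ) = (r:ℝ) := by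
          rw [Rat.cast_def]
          congr 1
          exact_mod_cast Int.toNat_of_nonneg hnum.le
        have h1 : (1:ℕ) ≤ r.num.toNat := by omega
        have h2 : (1:ℕ) ≤ r.den := r.pos
        have := key2 r.num.toNat r.den h1 h2 (by rw [hmn]; exact hr1.le)
        rw [hmn] at this
        linarith
    have hUQVP : U * Q = V * P := (div_eq_div_iff hP.ne' hQ.ne').mp hxy
    have hveq : v = α * u := by
      have h' : (-u) * (-q) = (-v) * (-p) := by
        simp only [hU_def, hQ_def, hV_def, hP_def] at hUQVP; linarith [hUQVP]
      have hp0 : p ≠ 0 := ne_of_lt hp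
      rw [hα_def]
      field_simp
      nlinarith [h']
    apply NNReal.coe_injective
    rw [NNReal.coe_rpow]
    rw [Real.rpow_def_of_pos hs0']
    rw [← Real.exp_log hθpos]
    congr 1
    rw [hv_def] at hveq
    rw [hveq, hu_def]
    ring

/-- For any convex multiplicative system of means, there is `α ∈ [0,1]` with
`M((s, 1−s), (1, 0)) = s^α` for all `s ∈ (0,1)`. -/
theorem meanSystem_theta_eq_rpow (S : MeanSystem)
    (hconv : S.IsConvex) (hmul : S.IsMultiplicative) :
    ∃ α : ℝ, 0 ≤ α ∧ α ≤ 1 ∧ ∀ s : ℝ≥0, 0 < s → s < 1 →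
      S.M 2 ![s, 1 - s] ![1, 0] = s ^ α := by
  set θ : ℝ≥0 → ℝ≥0 := fun s => S.M 2 ![s, 1-s] ![1,0] with hθ
  have hle1 : ∀ s : ℝ≥0, s < 1 → θ s ≤ 1 := by
    intro s hs1
    have hsum : (∑ i, (![s, 1-s] : Fin 2 → ℝ≥0) i) = 1 := by
      simp [Fin.sum_univ_two, add_tsub_cancel_of_le hs1.le]
    have h := S.mono ![s, 1-s] ![1,0] (fun _ => 1) hsum (by intro i; fin_cases i <;> simp)
    rw [mean_const S _ hsum 1] at h
    exact h
  have hmulθ : ∀ s t : ℝ≥0, 0 < s → s < 1 → 0 < t → t < 1 → θ (s*t) = θ s * θ t := by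
    intro s t _ hs1 _ ht1
    exact theta_mul S hmul s t hs1.le ht1.le
  have hmonoθ : ∀ s t : ℝ≥0, 0 < s → s ≤ t → t < 1 → θ s ≤ θ t := by
    intro s t hs0 hst ht1
    rcases eq_or_lt_of_le hst with rfl | hlt
    · exact le_refl _
    · have ht0 : 0 < t := lt_of_le_of_lt zero_le hlt
      have hdiv : t * (s/t) = s := by
        rw [mul_comm, div_mul_cancel₀ _ ht0.ne']
      have hd1 : s/t ≤ 1 := by
        rw [div_le_one ht0]; exact hst
      have hd1' : s/t < 1 := by
        rw [div_lt_one ht0]; exact hlt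
      calc θ s = θ (t * (s/t)) := by rw [hdiv]
      _ = θ t * θ (s/t) := theta_mul S hmul t (s/t) ht1.le hd1
      _ ≤ θ t * 1 := mul_le_mul_right (hle1 _ hd1') _
      _ = θ t := mul_one _
  have hhalfθ : (1/2 : ℝ≥0) ≤ θ (1/2) := theta_half S hconv
  exact power_classify θ hmulθ hmonoθ hle1 hhalfθ
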